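/- Fix integers l ≥ 1, d ≥ 1 and a tuple c = (c_0,…,c_{l−1}) of nonnegative integers with c_0+…+c_{l−1} = d; set m_p = c_0+…+c_p, J = {j : c_j = 0}, and I_t = {p : m_p = t} for 0 ≤ t ≤ d. Let C = (C^0,…,C^{l−1}) be an l-tuple of strictly decreasing sequences of integers such that C^p stabilises with respect to some integer r_p, for each p. If D = (D^0,…,D^{l−1}) and D′ = (D′^0,…,D′^{l−1}) are both admissible tuples for C, then D^p = D′^p for every 0 ≤ p ≤ l−1. -/
import Mathlib


/-- A partition: a weakly decreasing, eventually-zero sequence of naturals.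
`part i` is the `(i+1)`-st part `λ_{i+1}`. -/
structure PartitionSeq where
  part : ℕ → ℕ
  antitone : Antitone part
  eventually_zero : ∃ N, ∀ i ≥ N, part i = 0

/-- The length `L(λ)`: the number of nonzero parts. -/
noncomputable def PartitionSeq.length (lam : PartitionSeq) : ℕ :=
  Set.ncard {i : ℕ | lam.part i ≠ 0}

/-- The size `|λ|`: the sum of the parts. -/
noncomputable def PartitionSeq.size (lam : PartitionSeq) : ℕ :=
  ∑ i ∈ Finset.range lam.length, lam.part i

/-- `beta lam r i` is the `(i+1)`-st entry `β^r(λ)_{i+1} = λ_{i+1} + r - i` of the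
`r`-shifted β-number (0-indexed version of `β^r(λ)_i = λ_i + r + 1 - i`). -/
def PartitionSeq.beta (lam : PartitionSeq) (r : ℤ) (i : ℕ) : ℤ :=
  (lam.part i : ℤ) + r - (i : ℤ)

/-- The residue `Res_λ(x) = Σ_{(a,b) ∈ Y(λ)} x^{cont(a,b)}` as a Laurent polynomial. -/
noncomputable def PartitionSeq.residue (lam : PartitionSeq) : LaurentPolynomial ℤ :=
  ∑ a ∈ Finset.range lam.length, ∑ b ∈ Finset.range (lam.part a),
    LaurentPolynomial.T ((b : ℤ) - (a : ℤ))

/-- The residue with `x ↦ x^d` substituted: `Res_λ(x^d)`. -/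
noncomputable def PartitionSeq.residuePow (lam : PartitionSeq) (d : ℕ) : LaurentPolynomial ℤ :=
  ∑ a ∈ Finset.range lam.length, ∑ b ∈ Finset.range (lam.part a),
    LaurentPolynomial.T ((d : ℤ) * ((b : ℤ) - (a : ℤ)))

/-- A strictly decreasing integer sequence `C` stabilises with respect to `r` if
`C_i = r + 1 - i` for all large `i` (0-indexed: `C i = r - i`). -/
def Stabilises (C : ℕ → ℤ) (r : ℤ) : Prop :=
  ∃ K : ℕ, ∀ i ≥ K, C i = r - (i : ℤ)

/-- The partial sum `m_p(c) = c_0 + ⋯ + c_p`. -/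
def psum {l : ℕ} (c : Fin l → ℕ) (p : Fin l) : ℕ := ∑ j ∈ Finset.Iic p, c j

/-- The multiplicity at `z ∈ ℤ` of the multiset `C_{[t]}`, for `0 ≤ t ≤ d`,
where `I_t = {p : m_p(c) = t}`; for `t = 0` or `t = d` this is the common multiset
`C_{[0]} = C_{[d]}` built from `I_0` (with entries shifted by `-1`) and `I_d`. -/
noncomputable def multAt {l : ℕ} (d : ℕ) (c : Fin l → ℕ) (C : Fin l → ℕ → ℤ)
    (t : ℕ) (z : ℤ) : ℕ :=
  if t = 0 ∨ t = d then
    Nat.card {pi : Fin l × ℕ // psum c pi.1 = 0 ∧ C pi.1 pi.2 - 1 = z} +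
    Nat.card {pi : Fin l × ℕ // psum c pi.1 = d ∧ C pi.1 pi.2 = z}
  else
    Nat.card {pi : Fin l × ℕ // psum c pi.1 = t ∧ C pi.1 pi.2 = z}

/-- The set `χ(C) = {l(C^q_i − 1) + q + 1 : 0 ≤ q ≤ l−1, i ≥ 1} ⊆ ℤ`. -/
def chiSet (l : ℕ) (C : Fin l → ℕ → ℤ) : Set ℤ :=
  {z : ℤ | ∃ (q : Fin l) (i : ℕ), z = (l : ℤ) * (C q i - 1) + (q : ℤ) + 1}

/-- `Ct` is an admissible tuple for `C` (with respect to the data `d`, `c`):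
(i) each `Ct p` is strictly decreasing; (ii) the multisets `Ct_{[t]}` and `C_{[t]}`
agree for all `0 ≤ t ≤ d`; (iii) for `0 ≠ p ∈ J = {j : c_j = 0}`, every term of `Ct p`
is a term of `Ct (p-1)`; (iv) if `0 ∈ J`, then for every term `z` of `Ct 0`,
`z - 1` is a term of `Ct (l-1)`. -/
def IsAdmissible {l : ℕ} (d : ℕ) (c : Fin l → ℕ) (C Ct : Fin l → ℕ → ℤ) : Prop :=
  (∀ p : Fin l, StrictAnti (Ct p)) ∧
  (∀ t ≤ d, ∀ z : ℤ, multAt d c Ct t z = multAt d c C t z) ∧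
  (∀ p : Fin l, c p = 0 → (p : ℕ) ≠ 0 →
    ∀ i : ℕ, ∃ i' : ℕ,
      Ct ⟨(p : ℕ) - 1, lt_of_le_of_lt (Nat.sub_le _ _) p.isLt⟩ i' = Ct p i) ∧
  (∀ h0 : 0 < l, c ⟨0, h0⟩ = 0 →
    ∀ i : ℕ, ∃ i' : ℕ, Ct ⟨l - 1, Nat.sub_lt h0 Nat.one_pos⟩ i' = Ct ⟨0, h0⟩ i - 1)

/-- The Young diagram of a partition, with 0-indexed nodes:
`(a,b)` is a node iff `b < λ_{a+1}`. -/
def YoungSet (lam : PartitionSeq) : Set (ℕ × ℕ) :=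
  {ab : ℕ × ℕ | ab.2 < lam.part ab.1}

/-- `S` is the Young diagram of the partition `mu`. -/
def IsDiagramOf (S : Set (ℕ × ℕ)) (mu : PartitionSeq) : Prop :=
  S = YoungSet mu

/-- The node `ab` of `Y(λ)` is removable: deleting it leaves the Young diagram
of some partition. -/
def IsRemovableNode (lam : PartitionSeq) (ab : ℕ × ℕ) : Prop :=
  ab ∈ YoungSet lam ∧ ∃ mu : PartitionSeq, IsDiagramOf (YoungSet lam \ {ab}) mu

/-- The node `ab` of `Y(λ)` is `j`-removable (mod `l`): it is removable and its
content is congruent to `j` mod `l`. -/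
def IsJRemovable (l j : ℕ) (lam : PartitionSeq) (ab : ℕ × ℕ) : Prop :=
  IsRemovableNode lam ab ∧ ((ab.2 : ℤ) - (ab.1 : ℤ)) ≡ (j : ℤ) [ZMOD (l : ℤ)]

/-- The node `ab` is `J`-removable for a set `J` of residues: `j`-removable
for some `j ∈ J`. -/
def IsSetRemovable (l : ℕ) (J : Set ℕ) (lam : PartitionSeq) (ab : ℕ × ℕ) : Prop :=
  ∃ j ∈ J, IsJRemovable l j lam ab

/-- `mu` is obtained from `lam` by deleting a single `J`-removable node. -/
def RemoveStep (l : ℕ) (J : Set ℕ) (lam mu : PartitionSeq) : Prop :=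
  ∃ ab : ℕ × ℕ, IsSetRemovable l J lam ab ∧ IsDiagramOf (YoungSet lam \ {ab}) mu

/-- The partial sum `m_p(θ) = θ_0 + ⋯ + θ_p` of a rational vector. -/
def psumQ {l : ℕ} (θ : Fin l → ℚ) (p : Fin l) : ℚ := ∑ j ∈ Finset.Iic p, θ j

/-- The map `s_i : ℚ^l → ℚ^l` (for `1 ≤ i ≤ l-1`). -/
def sAct {l : ℕ} (i : Fin l) (θ : Fin l → ℚ) : Fin l → ℚ := fun p =>
  if (p : ℕ) = (i : ℕ) - 1 then θ p + θ i
  else if p = i then -θ i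
  else if (p : ℕ) = (i : ℕ) + 1 then θ i + θ p
  else θ p


section Statement5Aux


lemma aux_le {D D' : ℕ → ℤ} (hD : StrictAnti D) (hD' : StrictAnti D')
    (h : Set.range D ⊆ Set.range D') (i : ℕ) (IH : ∀ m < i, D m = D' m) : D i ≤ D' i := by
  obtain ⟨j, hj⟩ := h (Set.mem_range_self i)
  by_contra hlt
  push_neg at hlt
  have hji : j < i := by
    by_contra hji
    push_neg at hji
    have := hD'.antitone hji
    omega
  have h1 := IH j hji
  have h2 := hD hji
  omega

lemma strictAnti_eq_of_range_eq {D D' : ℕ → ℤ} (hD : StrictAnti D) (hD' : StrictAnti D')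
    (h : Set.range D = Set.range D') : D = D' := by
  funext i
  induction i using Nat.strong_induction_on with
  | _ i IH =>
    exact le_antisymm (aux_le hD hD' h.subset i IH)
      (aux_le hD' hD h.symm.subset i (fun m hm => (IH m hm).symm))

lemma psum_mono {l : ℕ} (c : Fin l → ℕ) {p' p : Fin l} (h : p' ≤ p) : psum c p' ≤ psum c p :=
  Finset.sum_le_sum_of_subset (Finset.Iic_subset_Iic.mpr h)

lemma psum_le {l : ℕ} (c : Fin l → ℕ) (p : Fin l) : psum c p ≤ ∑ j, c j :=
  Finset.sum_le_sum_of_subset (Finset.subset_univ _)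

lemma psum_last {l : ℕ} (hl : 0 < l) (c : Fin l → ℕ) :
    psum c ⟨l-1, Nat.sub_lt hl Nat.one_pos⟩ = ∑ j, c j := by
  unfold psum
  congr 1
  refine Finset.eq_univ_iff_forall.mpr fun q => Finset.mem_Iic.mpr ?_
  have := q.isLt
  simp only [Fin.le_def, Fin.val_mk]
  omega

lemma psum_zero' {l : ℕ} (hl : 0 < l) (c : Fin l → ℕ) :
    psum c ⟨0, hl⟩ = c ⟨0, hl⟩ := by
  unfold psum
  rw [show Finset.Iic (⟨0, hl⟩ : Fin l) = {⟨0, hl⟩} from ?_, Finset.sum_singleton]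
  ext q
  have := q.isLt
  simp only [Finset.mem_Iic, Finset.mem_singleton, Fin.le_def, Fin.val_mk, Fin.ext_iff]
  omega

lemma psum_step {l : ℕ} (c : Fin l → ℕ) (p : Fin l) (hp : (p : ℕ) ≠ 0) :
    psum c p = psum c ⟨(p : ℕ) - 1, lt_of_le_of_lt (Nat.sub_le _ _) p.isLt⟩ + c p := by
  unfold psum
  rw [show Finset.Iic p = insert p (Finset.Iic ⟨(p : ℕ) - 1, lt_of_le_of_lt (Nat.sub_le _ _) p.isLt⟩) from ?_]
  · rw [Finset.sum_insert (by simp only [Finset.mem_Iic, Fin.le_def, Fin.val_mk]; omega)]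
    ring
  · ext q
    have := q.isLt
    simp only [Finset.mem_Iic, Finset.mem_insert, Fin.le_def, Fin.val_mk, Fin.ext_iff]
    omega

lemma nest {l : ℕ} {c : Fin l → ℕ} {Ct : Fin l → ℕ → ℤ}
    (h3 : ∀ p : Fin l, c p = 0 → (p : ℕ) ≠ 0 →
      ∀ i : ℕ, ∃ i' : ℕ,
        Ct ⟨(p : ℕ) - 1, lt_of_le_of_lt (Nat.sub_le _ _) p.isLt⟩ i' = Ct p i) :
    ∀ (n : ℕ) (p' p : Fin l), (p : ℕ) - (p' : ℕ) = n → p' ≤ p → psum c p' = psum c p →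
      Set.range (Ct p) ⊆ Set.range (Ct p') := by
  intro n
  induction n with
  | zero =>
    intro p' p hn hle _
    have : p' = p := by
      apply Fin.ext
      have := Fin.le_def.mp hle
      omega
    rw [this]
  | succ n IH =>
    intro p' p hn hle hsum
    have hle' := Fin.le_def.mp hle
    have hlt : (p' : ℕ) < (p : ℕ) := by omega
    have hp0 : (p : ℕ) ≠ 0 := by omega
    have hqlt : (p : ℕ) - 1 < l := lt_of_le_of_lt (Nat.sub_le _ _) p.isLt
    have hq_le : p' ≤ (⟨(p : ℕ) - 1, hqlt⟩ : Fin l) :=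
      Fin.le_def.mpr (show (p' : ℕ) ≤ (p : ℕ) - 1 by omega)
    have hq_le2 : (⟨(p : ℕ) - 1, hqlt⟩ : Fin l) ≤ p :=
      Fin.le_def.mpr (show (p : ℕ) - 1 ≤ (p : ℕ) by omega)
    have h1 : psum c p' ≤ psum c ⟨(p : ℕ) - 1, hqlt⟩ := psum_mono c hq_le
    have h2 : psum c ⟨(p : ℕ) - 1, hqlt⟩ ≤ psum c p := psum_mono c hq_le2
    have hstep := psum_step c p hp0
    have hcp : c p = 0 := by omega
    have hsub : Set.range (Ct p) ⊆ Set.range (Ct ⟨(p : ℕ) - 1, hqlt⟩) := by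
      rintro z ⟨i, rfl⟩
      obtain ⟨i', hi'⟩ := h3 p hcp hp0 i
      exact ⟨i', hi'⟩
    exact hsub.trans (IH p' ⟨(p : ℕ) - 1, hqlt⟩
      (show (p : ℕ) - 1 - (p' : ℕ) = n by omega) hq_le (by omega))

lemma nest' {l : ℕ} {c : Fin l → ℕ} {Ct : Fin l → ℕ → ℤ}
    (h3 : ∀ p : Fin l, c p = 0 → (p : ℕ) ≠ 0 →
      ∀ i : ℕ, ∃ i' : ℕ,
        Ct ⟨(p : ℕ) - 1, lt_of_le_of_lt (Nat.sub_le _ _) p.isLt⟩ i' = Ct p i)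
    {p' p : Fin l} (hle : p' ≤ p) (hsum : psum c p' = psum c p) :
    Set.range (Ct p) ⊆ Set.range (Ct p') :=
  nest h3 _ p' p rfl hle hsum

lemma card_pairs {l : ℕ} (Ct : Fin l → ℕ → ℤ) (hCt : ∀ p, StrictAnti (Ct p))
    (P : Fin l → Prop) (z : ℤ) :
    Nat.card {pi : Fin l × ℕ // P pi.1 ∧ Ct pi.1 pi.2 = z}
      = Set.ncard {p : Fin l | P p ∧ z ∈ Set.range (Ct p)} := by
  rw [← Nat.card_coe_set_eq]
  apply Nat.card_eq_of_bijective
    (f := fun x => (⟨x.1.1, x.2.1, ⟨x.1.2, x.2.2⟩⟩ :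
      {p : Fin l // p ∈ {p : Fin l | P p ∧ z ∈ Set.range (Ct p)}}))
  constructor
  · rintro ⟨⟨p, i⟩, hP, hi⟩ ⟨⟨p', i'⟩, hP', hi'⟩ heq
    have hpp : p = p' := congrArg Subtype.val heq
    subst hpp
    have h1 : Ct p i = z := hi
    have h2 : Ct p i' = z := hi'
    have : i = i' := (hCt p).injective (by rw [h1, h2])
    simp [this]
  · rintro ⟨p, hP, i, hi⟩
    exact ⟨⟨⟨p, i⟩, hP, hi⟩, rfl⟩

lemma card_pairs_shift {l : ℕ} (Ct : Fin l → ℕ → ℤ) (hCt : ∀ p, StrictAnti (Ct p))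
    (P : Fin l → Prop) (z : ℤ) :
    Nat.card {pi : Fin l × ℕ // P pi.1 ∧ Ct pi.1 pi.2 - 1 = z}
      = Set.ncard {p : Fin l | P p ∧ z + 1 ∈ Set.range (Ct p)} := by
  rw [← Nat.card_coe_set_eq]
  apply Nat.card_eq_of_bijective
    (f := fun x => (⟨x.1.1, x.2.1, ⟨x.1.2, by have h := x.2.2; show Ct x.1.1 x.1.2 = z + 1; omega⟩⟩ :
      {p : Fin l // p ∈ {p : Fin l | P p ∧ z + 1 ∈ Set.range (Ct p)}}))
  constructor
  · rintro ⟨⟨p, i⟩, hP, hi⟩ ⟨⟨p', i'⟩, hP', hi'⟩ heq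
    have hpp : p = p' := congrArg Subtype.val heq
    subst hpp
    have h1 : Ct p i - 1 = z := hi
    have h2 : Ct p i' - 1 = z := hi'
    have : i = i' := (hCt p).injective (by omega)
    simp [this]
  · rintro ⟨p, hP, i, hi⟩
    exact ⟨⟨⟨p, i⟩, hP, show Ct p i - 1 = z by omega⟩, rfl⟩


lemma multAt_mid {l : ℕ} (d : ℕ) (c : Fin l → ℕ) (Ct : Fin l → ℕ → ℤ)
    (hCt : ∀ p, StrictAnti (Ct p)) {t : ℕ} (ht0 : t ≠ 0) (htd : t ≠ d) (z : ℤ) :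
    multAt d c Ct t z = Set.ncard {p : Fin l | psum c p = t ∧ z ∈ Set.range (Ct p)} := by
  rw [multAt, if_neg (by tauto)]
  exact card_pairs Ct hCt (fun p => psum c p = t) z

lemma multAt_ext {l : ℕ} (d : ℕ) (c : Fin l → ℕ) (Ct : Fin l → ℕ → ℤ)
    (hCt : ∀ p, StrictAnti (Ct p)) (z : ℤ) :
    multAt d c Ct 0 z
      = Set.ncard {p : Fin l | psum c p = 0 ∧ z + 1 ∈ Set.range (Ct p)}
      + Set.ncard {p : Fin l | psum c p = d ∧ z ∈ Set.range (Ct p)} := by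
  rw [multAt, if_pos (Or.inl rfl), card_pairs Ct hCt (fun p => psum c p = d) z,
      card_pairs_shift Ct hCt (fun p => psum c p = 0) z]

lemma lt_le_ncard {l : ℕ} (p : Fin l) (Q : Fin l → Prop) (hQ : Q p) :
    Set.ncard {p' : Fin l | p' < p ∧ Q p'} < Set.ncard {p' : Fin l | p' ≤ p ∧ Q p'} := by
  apply Set.ncard_lt_ncard _ (Set.toFinite _)
  rw [Set.ssubset_def]
  refine ⟨fun p' h => ⟨h.1.le, h.2⟩, fun hsub => ?_⟩
  exact absurd (hsub ⟨le_refl p, hQ⟩).1 (lt_irrefl p)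

lemma char {l d : ℕ} (hl : 1 ≤ l) (hd : 1 ≤ d) (c : Fin l → ℕ) (hc : ∑ j, c j = d)
    (Ct : Fin l → ℕ → ℤ)
    (h1 : ∀ p, StrictAnti (Ct p))
    (h3 : ∀ p : Fin l, c p = 0 → (p : ℕ) ≠ 0 →
      ∀ i : ℕ, ∃ i' : ℕ,
        Ct ⟨(p : ℕ) - 1, lt_of_le_of_lt (Nat.sub_le _ _) p.isLt⟩ i' = Ct p i)
    (h4 : ∀ h0 : 0 < l, c ⟨0, h0⟩ = 0 →
      ∀ i : ℕ, ∃ i' : ℕ, Ct ⟨l - 1, Nat.sub_lt h0 Nat.one_pos⟩ i' = Ct ⟨0, h0⟩ i - 1)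
    (p : Fin l) (z : ℤ) :
    z ∈ Set.range (Ct p) ↔
      (if psum c p = 0 then
        Set.ncard {p' : Fin l | psum c p' = d}
          + Set.ncard {p' : Fin l | p' ≤ p ∧ psum c p' = 0} ≤ multAt d c Ct 0 (z - 1)
       else if psum c p = d then
        Set.ncard {p' : Fin l | p' ≤ p ∧ psum c p' = d} ≤ multAt d c Ct 0 z
       else
        Set.ncard {p' : Fin l | p' ≤ p ∧ psum c p' = psum c p}
          ≤ multAt d c Ct (psum c p) z) := by
  have hl0 : 0 < l := hl
  have hlast : psum c ⟨l - 1, Nat.sub_lt hl0 Nat.one_pos⟩ = d := by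
    rw [psum_last hl0 c, hc]
  have hle_last : ∀ p' : Fin l, p' ≤ ⟨l - 1, Nat.sub_lt hl0 Nat.one_pos⟩ := by
    intro p'
    have := p'.isLt
    exact Fin.le_def.mpr (by simp only [Fin.val_mk]; omega)
  by_cases h0 : psum c p = 0
  · rw [if_pos h0, multAt_ext d c Ct h1 (z - 1)]
    have hz1 : z - 1 + 1 = z := by ring
    rw [hz1]
    have hle0 : (⟨0, hl0⟩ : Fin l) ≤ p := Fin.le_def.mpr (Nat.zero_le _)
    have h00 : psum c ⟨0, hl0⟩ = 0 :=
      Nat.eq_zero_of_le_zero (le_trans (psum_mono c hle0) (le_of_eq h0))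
    have c00 : c ⟨0, hl0⟩ = 0 := by rw [← psum_zero' hl0 c]; exact h00
    constructor
    · intro hz
      have hsubA : {p' : Fin l | p' ≤ p ∧ psum c p' = 0}
          ⊆ {p' : Fin l | psum c p' = 0 ∧ z ∈ Set.range (Ct p')} := by
        rintro p' ⟨hle, hp'0⟩
        exact ⟨hp'0, nest' h3 hle (hp'0.trans h0.symm) hz⟩
      have hz0 : z ∈ Set.range (Ct ⟨0, hl0⟩) :=
        nest' h3 hle0 (h00.trans h0.symm) hz
      obtain ⟨i, hi⟩ := hz0
      obtain ⟨i', hi'⟩ := h4 hl0 c00 i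
      have hzlast : z - 1 ∈ Set.range (Ct ⟨l - 1, Nat.sub_lt hl0 Nat.one_pos⟩) :=
        ⟨i', by rw [hi', hi]⟩
      have hsubB : {p' : Fin l | psum c p' = d}
          ⊆ {p' : Fin l | psum c p' = d ∧ z - 1 ∈ Set.range (Ct p')} := by
        intro p' hp'd
        exact ⟨hp'd, nest' h3 (hle_last p') (hp'd.trans hlast.symm) hzlast⟩
      have iA := Set.ncard_le_ncard hsubA (Set.toFinite _)
      have iB := Set.ncard_le_ncard hsubB (Set.toFinite _)
      omega
    · intro hge
      by_contra hz
      have hsubA : {p' : Fin l | psum c p' = 0 ∧ z ∈ Set.range (Ct p')}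
          ⊆ {p' : Fin l | p' < p ∧ psum c p' = 0} := by
        rintro p' ⟨hp'0, hzp'⟩
        refine ⟨lt_of_not_ge fun hle => ?_, hp'0⟩
        exact hz (nest' h3 hle (h0.trans hp'0.symm) hzp')
      have hsubB : {p' : Fin l | psum c p' = d ∧ z - 1 ∈ Set.range (Ct p')}
          ⊆ {p' : Fin l | psum c p' = d} := fun p' h => h.1
      have iA := Set.ncard_le_ncard hsubA (Set.toFinite _)
      have iB := Set.ncard_le_ncard hsubB (Set.toFinite _)
      have ilt : Set.ncard {p' : Fin l | p' < p ∧ psum c p' = 0}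
          < Set.ncard {p' : Fin l | p' ≤ p ∧ psum c p' = 0} :=
        lt_le_ncard p (fun p' => psum c p' = 0) h0
      omega
  · by_cases hdd : psum c p = d
    · rw [if_neg h0, if_pos hdd, multAt_ext d c Ct h1 z]
      constructor
      · intro hz
        have hsubB : {p' : Fin l | p' ≤ p ∧ psum c p' = d}
            ⊆ {p' : Fin l | psum c p' = d ∧ z ∈ Set.range (Ct p')} := by
          rintro p' ⟨hle, hp'd⟩
          exact ⟨hp'd, nest' h3 hle (hp'd.trans hdd.symm) hz⟩
        have iB := Set.ncard_le_ncard hsubB (Set.toFinite _)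
        omega
      · intro hge
        by_contra hz
        have hzlast : z ∉ Set.range (Ct ⟨l - 1, Nat.sub_lt hl0 Nat.one_pos⟩) := by
          intro hzl
          exact hz (nest' h3 (hle_last p) (hdd.trans hlast.symm) hzl)
        have hA : {p' : Fin l | psum c p' = 0 ∧ z + 1 ∈ Set.range (Ct p')} = ∅ := by
          rw [Set.eq_empty_iff_forall_notMem]
          rintro p' ⟨hp'0, hzp'⟩
          have hle0 : (⟨0, hl0⟩ : Fin l) ≤ p' := Fin.le_def.mpr (Nat.zero_le _)
          have h00 : psum c ⟨0, hl0⟩ = 0 :=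
            Nat.eq_zero_of_le_zero (le_trans (psum_mono c hle0) (le_of_eq hp'0))
          have c00 : c ⟨0, hl0⟩ = 0 := by rw [← psum_zero' hl0 c]; exact h00
          obtain ⟨i, hi⟩ := nest' h3 hle0 (h00.trans hp'0.symm) hzp'
          obtain ⟨i', hi'⟩ := h4 hl0 c00 i
          exact hzlast ⟨i', by rw [hi', hi]; ring⟩
        have hsubB : {p' : Fin l | psum c p' = d ∧ z ∈ Set.range (Ct p')}
            ⊆ {p' : Fin l | p' < p ∧ psum c p' = d} := by
          rintro p' ⟨hp'd, hzp'⟩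
          refine ⟨lt_of_not_ge fun hle => ?_, hp'd⟩
          exact hz (nest' h3 hle (hdd.trans hp'd.symm) hzp')
        have iB := Set.ncard_le_ncard hsubB (Set.toFinite _)
        have ilt : Set.ncard {p' : Fin l | p' < p ∧ psum c p' = d}
            < Set.ncard {p' : Fin l | p' ≤ p ∧ psum c p' = d} :=
          lt_le_ncard p (fun p' => psum c p' = d) hdd
        rw [hA, Set.ncard_empty] at hge
        omega
    · rw [if_neg h0, if_neg hdd, multAt_mid d c Ct h1 h0 hdd z]
      constructor
      · intro hz
        have hsub : {p' : Fin l | p' ≤ p ∧ psum c p' = psum c p}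
            ⊆ {p' : Fin l | psum c p' = psum c p ∧ z ∈ Set.range (Ct p')} := by
          rintro p' ⟨hle, hp'⟩
          exact ⟨hp', nest' h3 hle hp' hz⟩
        exact Set.ncard_le_ncard hsub (Set.toFinite _)
      · intro hge
        by_contra hz
        have hsub : {p' : Fin l | psum c p' = psum c p ∧ z ∈ Set.range (Ct p')}
            ⊆ {p' : Fin l | p' < p ∧ psum c p' = psum c p} := by
          rintro p' ⟨hp', hzp'⟩
          refine ⟨lt_of_not_ge fun hle => ?_, hp'⟩
          exact hz (nest' h3 hle hp'.symm hzp')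
        have i1 := Set.ncard_le_ncard hsub (Set.toFinite _)
        have ilt : Set.ncard {p' : Fin l | p' < p ∧ psum c p' = psum c p}
            < Set.ncard {p' : Fin l | p' ≤ p ∧ psum c p' = psum c p} :=
          lt_le_ncard p (fun p' => psum c p' = psum c p) rfl
        omega

end Statement5Aux

/-- any two admissible tuples for an `l`-tuple `C` of strictly decreasing,
stabilising integer sequences coincide. -/
theorem statement5 (l d : ℕ) (hl : 1 ≤ l) (hd : 1 ≤ d)
    (c : Fin l → ℕ) (hc : ∑ j, c j = d)
    (C : Fin l → ℕ → ℤ)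
    (hdec : ∀ p, StrictAnti (C p))
    (hstab : ∀ p, ∃ rp : ℤ, Stabilises (C p) rp)
    (D D' : Fin l → ℕ → ℤ)
    (hD : IsAdmissible d c C D) (hD' : IsAdmissible d c C D') :
    ∀ p : Fin l, D p = D' p := by
  intro p
  obtain ⟨hD1, hD2, hD3, hD4⟩ := hD
  obtain ⟨hD'1, hD'2, hD'3, hD'4⟩ := hD'
  have hrange : Set.range (D p) = Set.range (D' p) := by
    ext z
    rw [char hl hd c hc D hD1 hD3 hD4 p z, char hl hd c hc D' hD'1 hD'3 hD'4 p z]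
    have e0 : ∀ w, multAt d c D 0 w = multAt d c D' 0 w := fun w =>
      (hD2 0 (Nat.zero_le d) w).trans (hD'2 0 (Nat.zero_le d) w).symm
    have et : ∀ w, multAt d c D (psum c p) w = multAt d c D' (psum c p) w := fun w =>
      (hD2 _ (le_trans (psum_le c p) (le_of_eq hc)) w).trans
        (hD'2 _ (le_trans (psum_le c p) (le_of_eq hc)) w).symm
    split_ifs <;> simp only [e0, et]
  exact strictAnti_eq_of_range_eq (hD1 p) (hD'1 p) hrange
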